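/- arXiv:1703.02668 — 7 statements merged into one kernel-verified Lean document; each statement's English description precedes it below -/
import Mathlib

section
/- Let N and M be positive integers and let Δ ⊆ ℤ satisfy Δ + N ⊆ Δ and Δ + M ⊆ Δ. Then for every integer x: x lies in the (N,M)-skeleton of Δ (i.e., x is an N-generator or an M-cogenerator of Δ) if and only if x − N + M lies in the (M,N)-skeleton of Δ (i.e., x − N + M is an M-generator or an N-cogenerator of Δ). -/
/-- For positive integers `N, M` and an `(N,M)`-invariant `Δ ⊆ ℤ`,
an integer `x` lies in the `(N,M)`-skeleton of `Δ` (x is an `N`-generator or an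
`M`-cogenerator) if and only if `x - N + M` lies in the `(M,N)`-skeleton of `Δ`
(an `M`-generator or an `N`-cogenerator). -/
theorem statement1 (N M : ℤ) (hN : 0 < N) (hM : 0 < M) (Δ : Set ℤ)
    (hΔN : ∀ x ∈ Δ, x + N ∈ Δ) (hΔM : ∀ x ∈ Δ, x + M ∈ Δ) (x : ℤ) :
    ((x ∈ Δ ∧ x - N ∉ Δ) ∨ (x ∉ Δ ∧ x + M ∈ Δ)) ↔
      (((x - N + M) ∈ Δ ∧ (x - N + M) - M ∉ Δ) ∨
        ((x - N + M) ∉ Δ ∧ (x - N + M) + N ∈ Δ)) := by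
  have e1 : x - N + M - M = x - N := by ring
  have e2 : x - N + M + N = x + M := by ring
  rw [e1, e2]
  constructor
  · rintro (⟨h1, h2⟩ | ⟨h1, h2⟩)
    · by_cases h : x - N + M ∈ Δ
      · exact Or.inl ⟨h, h2⟩
      · exact Or.inr ⟨h, hΔM x h1⟩
    · by_cases h : x - N + M ∈ Δ
      · refine Or.inl ⟨h, fun hc => h1 ?_⟩
        have := hΔN _ hc
        simpa using this
      · exact Or.inr ⟨h, h2⟩
  · rintro (⟨h1, h2⟩ | ⟨h1, h2⟩)
    · by_cases h : x ∈ Δ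
      · exact Or.inl ⟨h, h2⟩
      · refine Or.inr ⟨h, ?_⟩
        have := hΔN _ h1
        rwa [e2] at this
    · by_cases h : x ∈ Δ
      · exact Or.inl ⟨h, fun hc => h1 (hΔM _ hc)⟩
      · exact Or.inr ⟨h, h2⟩
end

section
/- Let d ≥ 1 and let S_0, S_1, …, S_{d−1} be pairwise disjoint nonempty finite subsets of ℤ. For i ≠ j in {0,…,d−1} set b̃_{ij} = min{ y − x : x ∈ S_i, y ∈ S_j, y > x } if this set is nonempty, and b̃_{ij} = ∞ otherwise. Then a tuple (a_1,…,a_{d−1}) ∈ ℝ^{d−1} is an acceptable shifting of S_0,…,S_{d−1} if and only if, setting a_0 = 0, one has a_i − a_j < b̃_{ij} for all i ≠ j in {0,…,d−1} (inequalities with b̃_{ij} = ∞ being vacuous). -/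
/-- The set `S + c ⊆ ℝ`, the shift of a finite set of integers by a real number. -/
def shiftedSet (S : Finset ℤ) (c : ℝ) : Set ℝ := (fun z : ℤ => (z : ℝ) + c) '' (S : Set ℤ)

/-- A tuple `a` (with `a 0 = 0`, modelling `(a_1, …, a_{d-1}) ∈ ℝ^{d-1}`) is an *acceptable
shifting* of `S_0, …, S_d` if there is a continuous path `φ : [0,1] → ℝ^{d}` (with vanishing
`0`-th component, so that `S_0` is never shifted) from `0` to `a` such that at every time `t`
the sets `S_0, S_1 + φ_1(t), …, S_d + φ_d(t)` are pairwise disjoint. -/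
def IsAcceptableShifting {d : ℕ} (S : Fin (d + 1) → Finset ℤ) (a : Fin (d + 1) → ℝ) : Prop :=
  a 0 = 0 ∧
  ∃ φ : ℝ → Fin (d + 1) → ℝ,
    ContinuousOn φ (Set.Icc 0 1) ∧
    (∀ t ∈ Set.Icc (0 : ℝ) 1, φ t 0 = 0) ∧
    φ 0 = (fun _ => 0) ∧ φ 1 = a ∧
    ∀ t ∈ Set.Icc (0 : ℝ) 1, ∀ i j, i ≠ j →
      Disjoint (shiftedSet (S i) (φ t i)) (shiftedSet (S j) (φ t j))

/-- `b̃_{ij} = min { y - x : x ∈ S_i, y ∈ S_j, y > x }`, as an extended real number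
(`+∞` when the set is empty, since `sInf ∅ = ⊤` in `EReal`). -/
noncomputable def btilde {d : ℕ} (S : Fin (d + 1) → Finset ℤ) (i j : Fin (d + 1)) : EReal :=
  sInf ((fun p : ℤ × ℤ => (((p.2 - p.1 : ℤ) : ℝ) : EReal)) ''
    {p : ℤ × ℤ | p.1 ∈ S i ∧ p.2 ∈ S j ∧ p.1 < p.2})

lemma btilde_le {d : ℕ} (S : Fin (d + 1) → Finset ℤ) {i j : Fin (d + 1)} {x y : ℤ}
    (hx : x ∈ S i) (hy : y ∈ S j) (hxy : x < y) :
    btilde S i j ≤ (((y - x : ℤ) : ℝ) : EReal) :=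
  sInf_le ⟨(x, y), ⟨hx, hy, hxy⟩, rfl⟩

lemma aux_no_collision {d : ℕ} (S : Fin (d + 1) → Finset ℤ) {i j : Fin (d + 1)} {x y : ℤ}
    {t : ℝ} {a : Fin (d + 1) → ℝ}
    (hx : x ∈ S i) (hy : y ∈ S j) (hxy : x < y) (ht : t ∈ Set.Icc (0 : ℝ) 1)
    (hlt : ((a i - a j : ℝ) : EReal) < btilde S i j)
    (heq : (y : ℝ) - (x : ℝ) = t * (a i - a j)) : False := by
  have h1 : (1 : ℝ) ≤ (y : ℝ) - (x : ℝ) := by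
    have : (1 : ℤ) ≤ y - x := by omega
    exact_mod_cast this
  have hA : 0 < a i - a j := by
    by_contra h
    push_neg at h
    have : t * (a i - a j) ≤ 0 := mul_nonpos_of_nonneg_of_nonpos ht.1 h
    linarith
  have hle : (y : ℝ) - (x : ℝ) ≤ a i - a j := by
    rw [heq]
    calc t * (a i - a j) ≤ 1 * (a i - a j) :=
          mul_le_mul_of_nonneg_right ht.2 (le_of_lt hA)
      _ = a i - a j := one_mul _
  have h2 : btilde S i j ≤ ((a i - a j : ℝ) : EReal) := by
    refine le_trans (btilde_le S hx hy hxy) ?_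
    have : ((y - x : ℤ) : ℝ) ≤ a i - a j := by push_cast; linarith
    exact_mod_cast this
  exact absurd hlt (not_lt.mpr h2)

/-- Let `d ≥ 1` (here `d+1` with `d : ℕ`) and let `S_0, …, S_d` be pairwise
disjoint nonempty finite subsets of `ℤ`. A tuple is an acceptable shifting if and only if
(setting `a_0 = 0`) one has `a_i - a_j < b̃_{ij}` for all `i ≠ j`. -/
theorem statement2 (d : ℕ) (S : Fin (d + 1) → Finset ℤ)
    (hne : ∀ i, (S i).Nonempty)
    (hdisj : ∀ i j, i ≠ j → Disjoint (S i) (S j))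
    (a : Fin (d + 1) → ℝ) :
    IsAcceptableShifting S a ↔
      (a 0 = 0 ∧ ∀ i j, i ≠ j → ((a i - a j : ℝ) : EReal) < btilde S i j) := by
  constructor
  · rintro ⟨ha0, φ, hφc, -, hφ0, hφ1, hφd⟩
    refine ⟨ha0, fun i j hij => ?_⟩
    set P : Set (ℤ × ℤ) := {p : ℤ × ℤ | p.1 ∈ S i ∧ p.2 ∈ S j ∧ p.1 < p.2} with hP
    by_cases hPe : P = ∅
    · have : btilde S i j = ⊤ := by
        unfold btilde
        rw [← hP, hPe, Set.image_empty, sInf_empty]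
      rw [this]
      exact EReal.coe_lt_top _
    · -- P nonempty; extract the minimum difference via a finset
      set F : Finset ℤ :=
        ((S i ×ˢ S j).filter (fun p => p.1 < p.2)).image (fun p => p.2 - p.1) with hF
      have hFne : F.Nonempty := by
        rcases Set.nonempty_iff_ne_empty.mpr hPe with ⟨p, hp1, hp2, hp3⟩
        exact ⟨p.2 - p.1, Finset.mem_image.mpr ⟨p,
          Finset.mem_filter.mpr ⟨Finset.mem_product.mpr ⟨hp1, hp2⟩, hp3⟩, rfl⟩⟩
      set m : ℤ := F.min' hFne with hm
      obtain ⟨p, hpmem, hpval⟩ := Finset.mem_image.mp (F.min'_mem hFne)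
      rw [Finset.mem_filter, Finset.mem_product] at hpmem
      obtain ⟨⟨hpx, hpy⟩, hplt⟩ := hpmem
      have hm1 : (1 : ℤ) ≤ m := by omega
      -- m ≤ btilde
      have hmb : ((m : ℝ) : EReal) ≤ btilde S i j := by
        refine le_sInf ?_
        rintro b ⟨q, ⟨hq1, hq2, hq3⟩, rfl⟩
        have h1 : m ≤ q.2 - q.1 := Finset.min'_le _ _ (Finset.mem_image.mpr ⟨q,
          Finset.mem_filter.mpr ⟨Finset.mem_product.mpr ⟨hq1, hq2⟩, hq3⟩, rfl⟩)
        show ((m : ℝ) : EReal) ≤ (((q.2 - q.1 : ℤ) : ℝ) : EReal)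
        exact_mod_cast h1
      -- a i - a j < m, by IVT
      have hlt : a i - a j < (m : ℝ) := by
        by_contra h
        push_neg at h
        set f : ℝ → ℝ := fun t => φ t i - φ t j with hf
        have hfc : ContinuousOn f (Set.Icc 0 1) :=
          ((continuous_apply i).comp_continuousOn hφc).sub
            ((continuous_apply j).comp_continuousOn hφc)
        have hf0 : f 0 = 0 := by simp [hf, hφ0]
        have hf1 : f 1 = a i - a j := by simp [hf, hφ1]
        have hsub := intermediate_value_Icc (by norm_num : (0:ℝ) ≤ 1) hfc
        have hmem : (m : ℝ) ∈ Set.Icc (f 0) (f 1) := by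
          rw [hf0, hf1]
          constructor
          · have : (0 : ℝ) < (m : ℝ) := by exact_mod_cast (by omega : (0:ℤ) < m)
            linarith
          · exact h
        obtain ⟨t, ht, hft⟩ := hsub hmem
        have hd := hφd t ht i j hij
        rw [Set.disjoint_left] at hd
        have hcollide : (p.1 : ℝ) + φ t i = (p.2 : ℝ) + φ t j := by
          have hval : ((p.2 - p.1 : ℤ) : ℝ) = φ t i - φ t j := by
            rw [hpval]; exact hft.symm
          push_cast at hval
          linarith
        exact hd ⟨p.1, hpx, rfl⟩ ⟨p.2, hpy, hcollide.symm⟩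
      calc ((a i - a j : ℝ) : EReal) < ((m : ℝ) : EReal) := by exact_mod_cast hlt
        _ ≤ btilde S i j := hmb
  · rintro ⟨ha0, hlt⟩
    refine ⟨ha0, fun t k => t * a k, ?_, ?_, ?_, ?_, ?_⟩
    · exact (continuous_pi fun k => continuous_id.mul continuous_const).continuousOn
    · intro t ht; show t * a 0 = 0; rw [ha0, mul_zero]
    · funext k; exact zero_mul _
    · funext k; exact one_mul _
    · intro t ht i j hij
      rw [Set.disjoint_left]
      rintro u ⟨x, hx, rfl⟩ ⟨y, hy, hyeq⟩
      rcases lt_trichotomy x y with hxy | hxy | hxy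
      · refine aux_no_collision S hx hy hxy ht (hlt i j hij) ?_
        have : (y : ℝ) + t * a j = (x : ℝ) + t * a i := hyeq
        ring_nf
        ring_nf at this
        linarith
      · subst hxy
        exact (Finset.disjoint_left.mp (hdisj i j hij) hx) hy
      · refine aux_no_collision S hy hx hxy ht (hlt j i hij.symm) ?_
        have : (y : ℝ) + t * a j = (x : ℝ) + t * a i := hyeq
        ring_nf
        ring_nf at this
        linarith
end

section
/- Let d ≥ 1 and let S_0, S_1, …, S_{d−1} be pairwise disjoint nonempty finite subsets of ℤ. Then the set of acceptable shiftings of S_0,…,S_{d−1} is a convex subset of ℝ^{d−1}. -/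
lemma shifted_disjoint_iff (S T : Finset ℤ) (c e : ℝ) :
    Disjoint (shiftedSet S c) (shiftedSet T e) ↔
      ∀ p ∈ S, ∀ q ∈ T, (p : ℝ) + c ≠ (q : ℝ) + e := by
  constructor
  · intro h p hp q hq heq
    have h1 : ((p : ℝ) + c) ∈ shiftedSet S c := ⟨p, by simpa using hp, rfl⟩
    have h2 : ((p : ℝ) + c) ∈ shiftedSet T e := ⟨q, by simpa using hq, heq.symm⟩
    exact Set.disjoint_left.1 h h1 h2
  · intro h
    rw [Set.disjoint_left]
    rintro x ⟨p, hp, rfl⟩ ⟨q, hq, hx⟩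
    exact h p (by simpa using hp) q (by simpa using hq) hx.symm

lemma pos_on_of_ne (f : ℝ → ℝ) (hf : ContinuousOn f (Set.Icc 0 1)) (h0 : 0 < f 0)
    (hne : ∀ t ∈ Set.Icc (0 : ℝ) 1, f t ≠ 0) :
    ∀ t ∈ Set.Icc (0 : ℝ) 1, 0 < f t := by
  intro t ht
  by_contra hle
  have hlt : f t < 0 := lt_of_le_of_ne (not_lt.1 hle) (hne t ht)
  have hsub : Set.Icc (0 : ℝ) t ⊆ Set.Icc 0 1 := Set.Icc_subset_Icc le_rfl ht.2
  have := intermediate_value_Icc' ht.1 (hf.mono hsub)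
  have h0mem : (0 : ℝ) ∈ Set.Icc (f t) (f 0) := ⟨hlt.le, h0.le⟩
  obtain ⟨u, hu, hfu⟩ := this h0mem
  exact hne u (hsub hu) hfu

/-- Along any admissible path, `(p - q) * (φ t i + p - (φ t j + q))` stays positive. -/
lemma key_pos {d : ℕ} (S : Fin (d + 1) → Finset ℤ)
    (hdisj : ∀ i j, i ≠ j → Disjoint (S i) (S j))
    (φ : ℝ → Fin (d + 1) → ℝ) (hφ : ContinuousOn φ (Set.Icc 0 1))
    (hφ0 : φ 0 = (fun _ => 0))
    (hd : ∀ t ∈ Set.Icc (0 : ℝ) 1, ∀ i j, i ≠ j →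
      Disjoint (shiftedSet (S i) (φ t i)) (shiftedSet (S j) (φ t j)))
    {i j : Fin (d + 1)} (hij : i ≠ j) {p q : ℤ} (hp : p ∈ S i) (hq : q ∈ S j) :
    ∀ t ∈ Set.Icc (0 : ℝ) 1,
      0 < ((p : ℝ) - q) * ((φ t i + p) - (φ t j + q)) := by
  set f : ℝ → ℝ := fun t => ((p : ℝ) - q) * ((φ t i + p) - (φ t j + q)) with hf
  have hpq : (p : ℝ) ≠ q := by
    have : p ≠ q := by
      intro h; exact (Finset.disjoint_left.1 (hdisj i j hij)) hp (h ▸ hq)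
    exact_mod_cast this
  have hcont : ContinuousOn f (Set.Icc 0 1) := by
    apply ContinuousOn.mul continuousOn_const
    exact (((continuous_apply i).comp_continuousOn hφ).add continuousOn_const).sub
      (((continuous_apply j).comp_continuousOn hφ).add continuousOn_const)
  have hne : ∀ t ∈ Set.Icc (0 : ℝ) 1, f t ≠ 0 := by
    intro t ht
    have hd' := (shifted_disjoint_iff _ _ _ _).1 (hd t ht i j hij) p hp q hq
    have : (φ t i + p) - (φ t j + q) ≠ 0 := by
      intro h; apply hd'; linarith [sub_eq_zero.1 h]
    exact mul_ne_zero (sub_ne_zero.2 hpq) this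
  have h0 : 0 < f 0 := by
    simp only [hf, hφ0]
    have hne0 : ((p : ℝ) - q) ≠ 0 := sub_ne_zero.2 hpq
    have heq : (0 : ℝ) + p - (0 + q) = (p : ℝ) - q := by ring
    rw [heq]
    exact mul_self_pos.2 hne0
  exact pos_on_of_ne f hcont h0 hne

/-- Let `d ≥ 1` and `S_0, …, S_{d-1}` be pairwise disjoint nonempty finite
subsets of `ℤ`. The set of acceptable shiftings is convex. -/
theorem statement3 (d : ℕ) (S : Fin (d + 1) → Finset ℤ)
    (hne : ∀ i, (S i).Nonempty)
    (hdisj : ∀ i j, i ≠ j → Disjoint (S i) (S j)) :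
    Convex ℝ {a : Fin (d + 1) → ℝ | IsAcceptableShifting S a} := by
  rintro a ⟨ha0, φa, hca, hza, h0a, h1a, hda⟩ b ⟨hb0, φb, hcb, hzb, h0b, h1b, hdb⟩
    α β hα hβ hαβ
  refine ⟨by simp [Pi.add_apply, ha0, hb0], fun t k => α * φa t k + β * φb t k, ?_, ?_, ?_, ?_, ?_⟩
  · apply continuousOn_pi.2
    intro k
    exact (continuousOn_const.mul ((continuous_apply k).comp_continuousOn hca)).add
      (continuousOn_const.mul ((continuous_apply k).comp_continuousOn hcb))
  · intro t ht; simp [hza t ht, hzb t ht]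
  · funext k; simp [h0a, h0b]
  · funext k; simp [h1a, h1b]
  · intro t ht i j hij
    rw [shifted_disjoint_iff]
    intro p hp q hq heq
    have hA := key_pos S hdisj φa hca h0a hda hij hp hq t ht
    have hB := key_pos S hdisj φb hcb h0b hdb hij hp hq t ht
    have hcomb : 0 < ((p : ℝ) - q) *
        ((α * φa t i + β * φb t i + p) - (α * φa t j + β * φb t j + q)) := by
      have hexp : ((p : ℝ) - q) *
          ((α * φa t i + β * φb t i + p) - (α * φa t j + β * φb t j + q))
          = α * (((p : ℝ) - q) * ((φa t i + p) - (φa t j + q)))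
            + β * (((p : ℝ) - q) * ((φb t i + p) - (φb t j + q))) := by
        have h1 : α + β = 1 := hαβ
        linear_combination (-(((p : ℝ) - q) ^ 2)) * h1
      rw [hexp]
      rcases lt_or_eq_of_le hα with hα' | hα'
      · have : 0 ≤ β * (((p : ℝ) - q) * ((φb t i + p) - (φb t j + q))) :=
          mul_nonneg hβ hB.le
        nlinarith
      · have hβ1 : β = 1 := by linarith
        rw [← hα', hβ1]; simpa using hB
    have : ((p : ℝ) - q) * ((α * φa t i + β * φb t i + p) - (α * φa t j + β * φb t j + q)) = 0 := by
      have heq' : (p : ℝ) + (α * φa t i + β * φb t i) = q + (α * φa t j + β * φb t j) := heq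
      have : (α * φa t i + β * φb t i + p) - (α * φa t j + β * φb t j + q) = 0 := by
        linarith [heq']
      rw [this, mul_zero]
    linarith
end

section
/- Let n and m be coprime positive integers. The map (x,y) ↦ mn − m − n − nx − my is a bijection from the set { (x,y) ∈ ℤ≥0 × ℤ≥0 : nx + my ≤ mn − m − n } onto the set ℤ≥0 ∖ Γ_{n,m} of nonnegative integers not representable as a nonnegative integer combination of n and m. -/
/-- For coprime positive integers `n, m`, the map
`(x,y) ↦ mn - m - n - nx - my` is a bijection from the set of boxes
`{(x,y) ∈ ℤ≥0 × ℤ≥0 : nx + my ≤ mn - m - n}` (the boxes of nonnegative rank, i.e. those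
under the diagonal of the `n × m` rectangle) onto the set of nonnegative integers not
representable as a nonnegative integer combination of `n` and `m`. -/
theorem statement8 (n m : ℕ) (hn : 0 < n) (hm : 0 < m) (hco : Nat.Coprime n m) :
    Set.BijOn (fun p : ℤ × ℤ => (m : ℤ) * n - m - n - n * p.1 - m * p.2)
      {p : ℤ × ℤ | 0 ≤ p.1 ∧ 0 ≤ p.2 ∧ (n : ℤ) * p.1 + (m : ℤ) * p.2 ≤ (m : ℤ) * n - m - n}
      {z : ℤ | 0 ≤ z ∧ ¬∃ a b : ℤ, 0 ≤ a ∧ 0 ≤ b ∧ z = a * n + b * m} := by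
  have hmZ : (0:ℤ) < m := by exact_mod_cast hm
  have hnZ : (0:ℤ) < n := by exact_mod_cast hn
  obtain ⟨u, v, huv⟩ : ∃ u v : ℤ, u * n + v * m = 1 := by
    refine ⟨Nat.gcdA n m, Nat.gcdB n m, ?_⟩
    have h := Nat.gcd_eq_gcd_ab n m
    rw [hco.gcd_eq_one] at h
    push_cast at h
    linarith
  -- divisibility transfer lemma: if m ∣ n * t then m ∣ t
  have hdvd_cancel : ∀ t : ℤ, (m:ℤ) ∣ n * t → (m:ℤ) ∣ t := by
    intro t ht
    have : t = u * (n * t) + v * t * m := by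
      have : t = (u * n + v * m) * t := by rw [huv]; ring
      linarith [this]
    rw [this]
    exact dvd_add (Dvd.dvd.mul_left ht u) (Dvd.intro_left _ rfl)
  constructor
  · -- MapsTo
    rintro ⟨x, y⟩ ⟨hx, hy, hle⟩
    refine ⟨by simp; linarith, ?_⟩
    rintro ⟨a, b, ha, hb, hz⟩
    simp only at hz
    -- m*n = (a+x+1)*n + (b+y+1)*m
    have hmdvd : (m:ℤ) ∣ n * (a + x + 1) := by
      refine ⟨n - (b + y + 1), ?_⟩
      linarith [hz]
    have h2 : (m:ℤ) ∣ a + x + 1 := hdvd_cancel _ hmdvd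
    have h3 : (m:ℤ) ≤ a + x + 1 := Int.le_of_dvd (by linarith) h2
    nlinarith [mul_le_mul_of_nonneg_left h3 (le_of_lt hnZ)]
  constructor
  · -- InjOn
    rintro ⟨x, y⟩ ⟨hx, hy, hle⟩ ⟨x', y'⟩ ⟨hx', hy', hle'⟩ heq
    simp only at heq
    have key : (n:ℤ) * (x - x') = m * (y' - y) := by linarith
    have hd : (m:ℤ) ∣ x - x' := hdvd_cancel _ ⟨y' - y, key⟩
    have hxm : x < m := by nlinarith
    have hxm' : x' < m := by nlinarith
    have hxx : x = x' := by
      rcases hd with ⟨k, hk⟩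
      have : k = 0 := by nlinarith
      linarith [hk, this ▸ hk]
    have hyy : y = y' := by
      rw [hxx] at key
      have : (m:ℤ) * (y' - y) = 0 := by linarith
      have := mul_eq_zero.mp this
      rcases this with h | h
      · exact absurd h (ne_of_gt hmZ)
      · linarith
    simp [hxx, hyy]
  · -- SurjOn
    rintro z ⟨hz0, hnr⟩
    set w : ℤ := (m:ℤ) * n - m - n - z with hw
    set x : ℤ := (w * u) % m with hxdef
    have hx0 : 0 ≤ x := Int.emod_nonneg _ (ne_of_gt hmZ)
    have hxm : x < m := Int.emod_lt_of_pos _ hmZ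
    have hd1 : (m:ℤ) ∣ w * u - x := by
      refine ⟨w * u / m, ?_⟩
      have := Int.mul_ediv_add_emod (w * u) m
      linarith
    have hd : (m:ℤ) ∣ w - n * x := by
      have h1 : w - n * x = w * (v * m) + n * (w * u - x) := by
        have : w = w * (u * n + v * m) := by rw [huv]; ring
        linarith [this]
      rw [h1]
      exact dvd_add ⟨w * v, by ring⟩ (Dvd.dvd.mul_left hd1 n)
    obtain ⟨k, hk⟩ := hd
    have hk0 : 0 ≤ k := by
      by_contra hneg
      push_neg at hneg
      exact hnr ⟨m - 1 - x, -1 - k, by linarith, by linarith, by linarith⟩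
    refine ⟨(x, k), ⟨hx0, hk0, by simp; linarith⟩, by simp; linarith⟩
end

section
/- Let n and m be coprime positive integers and let Δ be a 0-normalized (n,m)-invariant subset of ℤ≥0. Then ζ(D(Δ)) = G(Δ). Concretely: the ranks of the vertical steps of the boundary path of D(Δ) are exactly the n-generators of Δ and the ranks of its horizontal steps are exactly the m-cogenerators of Δ, and sorting the steps of the boundary path of D(Δ) in increasing order of rank produces precisely the path whose step word is obtained by sorting the union of the n-generators and m-cogenerators of Δ in increasing order and replacing each n-generator by a vertical step and each m-cogenerator by a horizontal step. -/
/-!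
Words `w : List Bool` encode lattice paths in the `n × m` rectangle from `(m,0)` to `(0,n)`;
`true` is a vertical step and `false` a horizontal step.
-/

/-- The rank of the `k`-th step (0-indexed): the first step has rank `-m`, and each rank is
the previous one plus `n` if the previous step is horizontal, minus `m` if it is vertical. -/
def stepRank (n m : ℕ) (w : List Bool) (k : ℕ) : ℤ :=
  -(m : ℤ) + ∑ j ∈ Finset.range k, (if w.getD j false then -(m : ℤ) else (n : ℤ))

/-- The sweep map `ζ`: rearrange the steps of `w` in increasing order of rank. -/
def sweep (n m : ℕ) (w : List Bool) : List Bool :=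
  ((List.range w.length).mergeSort (fun k k' =>
      decide (stepRank n m w k < stepRank n m w k' ∨
        (stepRank n m w k = stepRank n m w k' ∧ k' ≤ k)))).map
    (fun k => w.getD k false)

/-- The index in `w` of the unique vertical step lying in row `y` (the `(y+1)`-st `true`). -/
def vIdx (w : List Bool) (y : ℕ) : ℕ := (w.findIdxs (· == true)).getD y 0

/-- The index in `w` of the unique horizontal step lying in column `x` (the `(m-x)`-th
`false`, since horizontal steps are traversed from column `m-1` down to column `0`). -/
def hIdx (m : ℕ) (w : List Bool) (x : ℕ) : ℕ := (w.findIdxs (· == false)).getD (m - 1 - x) 0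

/-- The box `(x,y)` belongs to the Young diagram bounded by the path `w` iff the vertical
step in its row occurs before the horizontal step in its column. -/
def inDiagram (m : ℕ) (w : List Bool) (x y : ℕ) : Prop := vIdx w y < hIdx m w x

/-- The rank of the box `(x,y)` in the `n × m` rectangle:
`rank(x,y) = mn - m - n - nx - my`. -/
def boxRank (n m : ℕ) (x y : ℕ) : ℤ := (m : ℤ) * n - m - n - n * x - m * y


private lemma findIdxs_shift (p : Bool → Bool) (l : List Bool) (i : ℕ) :
    List.foldrIdx (fun i a is => if p a then i :: is else is) [] l i
      = (List.foldrIdx (fun i a is => if p a then i :: is else is) [] l 0).map (· + i) := by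
  induction l generalizing i with
  | nil => simp
  | cons a l ih =>
    simp only [List.foldrIdx]
    rw [ih (i+1), ih 1]
    have hc : ((· + i) ∘ (· + 1) : ℕ → ℕ) = (· + (i+1)) := by funext x; simp; omega
    by_cases h : p a = true
    · rw [if_pos h, if_pos h, List.map_cons, List.map_map, hc, Nat.zero_add]
    · rw [if_neg h, if_neg h, List.map_map, hc]

private lemma findIdxs_cons' (p : Bool → Bool) (a : Bool) (l : List Bool) :
    List.findIdxs p (a :: l) =
      if p a then 0 :: (List.findIdxs p l).map (· + 1) else (List.findIdxs p l).map (· + 1) := by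
  unfold List.findIdxs
  simp only [List.foldrIdx, cond_eq_if, Nat.zero_add]
  rw [findIdxs_shift p l 1]

private lemma length_findIdxs (p : Bool → Bool) (l : List Bool) :
    (l.findIdxs p).length = l.countP p := by
  induction l with
  | nil => rfl
  | cons a l ih =>
    rw [findIdxs_cons', List.countP_cons]
    by_cases h : p a = true <;> simp [h, ih]

private lemma getD_map_add_one (l : List ℕ) (j : ℕ) (hj : j < l.length) :
    (l.map (· + 1)).getD j 0 = l.getD j 0 + 1 := by
  rw [List.getD_eq_getElem _ _ (by simpa using hj), List.getD_eq_getElem _ _ hj,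
    List.getElem_map]

/-- key characterization: for `j < countP p l`, `k ≤` (index of the `(j+1)`-st `p`-element)
iff at most `j` `p`-elements occur among the first `k` entries. -/
private lemma findIdxs_le_iff (p : Bool → Bool) (l : List Bool) (j k : ℕ)
    (hj : j < l.countP p) :
    k ≤ (l.findIdxs p).getD j 0 ↔ (l.take k).countP p ≤ j := by
  induction l generalizing j k with
  | nil => simp at hj
  | cons a l ih =>
    rw [findIdxs_cons']
    by_cases h : p a = true
    · simp only [h, if_true]
      cases j with
      | zero =>
        cases k with
        | zero => simp
        | succ k =>
          simp only [List.getD_cons_zero, List.take_succ_cons, List.countP_cons, h, if_true]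
          omega
      | succ j =>
        have hj' : j < l.countP p := by
          rw [List.countP_cons] at hj; simp [h] at hj; omega
        have hlen : j < (l.findIdxs p).length := by rw [length_findIdxs]; exact hj'
        cases k with
        | zero => simp
        | succ k =>
          simp only [List.getD_cons_succ]
          rw [getD_map_add_one _ _ hlen]
          simp only [List.take_succ_cons, List.countP_cons, h, if_true]
          rw [Nat.succ_le_succ_iff, ih j k hj']
          omega
    · have hb : p a = false := by simpa using h
      have hj' : j < l.countP p := by rw [List.countP_cons] at hj; simp [hb] at hj; omega
      have hlen : j < (l.findIdxs p).length := by rw [length_findIdxs]; exact hj'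
      rw [if_neg h]
      rw [getD_map_add_one _ _ hlen]
      cases k with
      | zero => simp
      | succ k =>
        simp only [List.take_succ_cons, List.countP_cons, hb, Bool.false_eq_true, if_false]
        rw [Nat.succ_le_succ_iff, ih j k hj']
        simp

open List
private lemma countP_take_succ (p : Bool → Bool) (w : List Bool) (k : ℕ) (hk : k < w.length) :
    (w.take (k+1)).countP p = (w.take k).countP p + (if p (w.getD k false) then 1 else 0) := by
  rw [List.take_succ, List.getElem?_eq_getElem hk, List.countP_append,
    List.getD_eq_getElem _ _ hk]
  simp [List.countP_cons]

private lemma count_tf (w : List Bool) :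
    w.countP (· == true) + w.countP (· == false) = w.length := by
  induction w with
  | nil => rfl
  | cons a l ih => cases a <;> simp [List.countP_cons, ← ih] <;> omega

private lemma countP_take_le (p : Bool → Bool) (w : List Bool) (k : ℕ) :
    (w.take k).countP p ≤ w.countP p :=
  (List.take_sublist k w).countP_le

private lemma countP_take_tf (w : List Bool) (k : ℕ) (hk : k ≤ w.length) :
    (w.take k).countP (· == true) + (w.take k).countP (· == false) = k := by
  rw [count_tf, List.length_take]; omega

private lemma stepRank_eq (n m : ℕ) (w : List Bool) (k : ℕ) (hk : k ≤ w.length) :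
    stepRank n m w k = -(m:ℤ) + n * ((w.take k).countP (· == false) : ℤ)
      - m * ((w.take k).countP (· == true) : ℤ) := by
  induction k with
  | zero => simp [stepRank]
  | succ k ih =>
    have hk' : k < w.length := hk
    have ih' := ih (le_of_lt hk')
    simp only [stepRank] at ih' ⊢
    rw [Finset.sum_range_succ, countP_take_succ _ _ _ hk', countP_take_succ _ _ _ hk']
    cases h : w.getD k false
    · rw [if_neg (show ¬(false = true) by decide), if_pos (show ((false == false) = true) by decide),
        if_neg (show ¬((false == true) = true) by decide)]
      push_cast
      linarith [ih']
    · rw [if_pos (show (true = true) by decide), if_neg (show ¬((true == false) = true) by decide),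
        if_pos (show ((true == true) = true) by decide)]
      push_cast
      linarith [ih']
private lemma idx_spec (p : Bool → Bool) (w : List Bool) (j : ℕ) (hj : j < w.countP p) :
    (w.findIdxs p).getD j 0 < w.length ∧
    p (w.getD ((w.findIdxs p).getD j 0) false) = true ∧
    (w.take ((w.findIdxs p).getD j 0)).countP p = j := by
  set K := (w.findIdxs p).getD j 0 with hK
  have h1 : (w.take K).countP p ≤ j := (findIdxs_le_iff p w j K hj).mp le_rfl
  have h3 : ¬ (w.length ≤ K) := fun h => by
    have := (findIdxs_le_iff p w j w.length hj).mp h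
    rw [List.take_length] at this; omega
  have hKlen : K < w.length := by omega
  have h2 : ¬ (w.take (K+1)).countP p ≤ j := fun h => by
    have := (findIdxs_le_iff p w j (K+1) hj).mpr h; omega
  rw [countP_take_succ p w K hKlen] at h2
  refine ⟨hKlen, ?_, ?_⟩
  · by_contra hp
    simp only [Bool.not_eq_true] at hp
    rw [hp] at h2; simp at h2; omega
  · by_cases hp : p (w.getD K false) = true
    · rw [hp] at h2; simp at h2; omega
    · simp only [Bool.not_eq_true] at hp; rw [hp] at h2; simp at h2; omega

section main
variable (n m : ℕ) (Δ : Set ℤ) (w : List Bool)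

private lemma cntF (hlen : w.length = n + m) (hcnt : w.count true = n) :
    w.countP (· == false) = m := by
  have h := count_tf w
  have : w.countP (· == true) = n := hcnt
  omega

private lemma claimA (hlen : w.length = n + m) (hcnt : w.count true = n)
    (hbd : ∀ x < m, ∀ y < n, (inDiagram m w x y ↔ boxRank n m x y ∈ Δ))
    (k : ℕ) (hk : k < w.length) (hw : w.getD k false = true) :
    ((w.take k).countP (· == true) < n) ∧
    ∀ x < m, (boxRank n m x ((w.take k).countP (· == true)) ∈ Δ ↔
      x + (w.take k).countP (· == false) < m) := by
  set t := (w.take k).countP (· == true) with hts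
  set f := (w.take k).countP (· == false) with hfs
  have cT : w.countP (· == true) = n := hcnt
  have cF : w.countP (· == false) = m := cntF n m w hlen hcnt
  have hsucc : (w.take (k+1)).countP (· == true) = t + 1 := by
    rw [countP_take_succ _ _ _ hk, hw]; rfl
  have hsuccF : (w.take (k+1)).countP (· == false) = f := by
    rw [countP_take_succ _ _ _ hk, hw]; rfl
  have ht : t < n := by
    have := countP_take_le (· == true) w (k+1); omega
  refine ⟨ht, fun x hx => ?_⟩
  rw [← hbd x hx t ht]
  have hv : vIdx w t = k := by
    have h1 : k ≤ vIdx w t := (findIdxs_le_iff _ w t k (by omega)).mpr (le_of_eq hts.symm)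
    have h2 : ¬ (k+1 ≤ vIdx w t) := fun h => by
      have := (findIdxs_le_iff _ w t (k+1) (by omega)).mp h; omega
    omega
  unfold inDiagram
  rw [hv]
  unfold hIdx
  have hj : m - 1 - x < w.countP (· == false) := by omega
  constructor
  · intro h
    have := (findIdxs_le_iff _ w (m-1-x) (k+1) hj).mp h
    rw [hsuccF] at this; omega
  · intro h
    have : (w.take (k+1)).countP (· == false) ≤ m - 1 - x := by rw [hsuccF]; omega
    have := (findIdxs_le_iff _ w (m-1-x) (k+1) hj).mpr this
    omega

private lemma claimB (hlen : w.length = n + m) (hcnt : w.count true = n)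
    (hbd : ∀ x < m, ∀ y < n, (inDiagram m w x y ↔ boxRank n m x y ∈ Δ))
    (k : ℕ) (hk : k < w.length) (hw : w.getD k false = false) :
    ((w.take k).countP (· == false) < m) ∧
    ∀ y < n, (boxRank n m (m - 1 - (w.take k).countP (· == false)) y ∈ Δ ↔
      y < (w.take k).countP (· == true)) := by
  set t := (w.take k).countP (· == true) with hts
  set f := (w.take k).countP (· == false) with hfs
  have cT : w.countP (· == true) = n := hcnt
  have cF : w.countP (· == false) = m := cntF n m w hlen hcnt
  have hsucc : (w.take (k+1)).countP (· == false) = f + 1 := by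
    rw [countP_take_succ _ _ _ hk, hw]; rfl
  have hsuccT : (w.take (k+1)).countP (· == true) = t := by
    rw [countP_take_succ _ _ _ hk, hw]; rfl
  have hf : f < m := by
    have := countP_take_le (· == false) w (k+1); omega
  refine ⟨hf, fun y hy => ?_⟩
  rw [← hbd (m - 1 - f) (by omega) y hy]
  have hh : hIdx m w (m - 1 - f) = k := by
    unfold hIdx
    have hj : m - 1 - (m - 1 - f) = f := by omega
    rw [hj]
    have h1 : k ≤ (w.findIdxs (· == false)).getD f 0 :=
      (findIdxs_le_iff _ w f k (by omega)).mpr (le_of_eq hfs.symm)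
    have h2 : ¬ (k+1 ≤ (w.findIdxs (· == false)).getD f 0) := fun h => by
      have := (findIdxs_le_iff _ w f (k+1) (by omega)).mp h; omega
    omega
  unfold inDiagram
  rw [hh]
  constructor
  · intro h
    by_contra hle
    push_neg at hle
    have : k ≤ vIdx w y := (findIdxs_le_iff _ w y k (by omega)).mpr (by omega)
    omega
  · intro h
    have h2 : ¬ (k ≤ vIdx w y) := fun hcon => by
      have := (findIdxs_le_iff _ w y k (by omega)).mp hcon; omega
    omega

end main

section main2
variable {n m : ℕ} {Δ : Set ℤ} {w : List Bool}

private lemma mem_combo (h0 : (0:ℤ) ∈ Δ) (hninv : ∀ x ∈ Δ, x + n ∈ Δ)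
    (hminv : ∀ x ∈ Δ, x + m ∈ Δ) : ∀ a b : ℕ, ((m:ℤ) * a + n * b) ∈ Δ := by
  intro a
  induction a with
  | zero =>
    intro b
    induction b with
    | zero => simpa using h0
    | succ b ihb =>
      convert hninv _ ihb using 1
      push_cast; ring
  | succ a iha =>
    intro b
    convert hminv _ (iha b) using 1
    push_cast; ring

private lemma mem_combo' (h0 : (0:ℤ) ∈ Δ) (hninv : ∀ x ∈ Δ, x + n ∈ Δ)
    (hminv : ∀ x ∈ Δ, x + m ∈ Δ) (a b : ℤ) (ha : 0 ≤ a) (hb : 0 ≤ b) :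
    ((m:ℤ) * a + n * b) ∈ Δ := by
  have := mem_combo h0 hninv hminv a.toNat b.toNat
  rwa [Int.toNat_of_nonneg ha, Int.toNat_of_nonneg hb] at this

private lemma vert_step (hn : 0 < n) (hm : 0 < m)
    (h0 : (0:ℤ) ∈ Δ) (hpos : ∀ x ∈ Δ, 0 ≤ x)
    (hninv : ∀ x ∈ Δ, x + n ∈ Δ) (hminv : ∀ x ∈ Δ, x + m ∈ Δ)
    (hlen : w.length = n + m) (hcnt : w.count true = n)
    (hbd : ∀ x < m, ∀ y < n, (inDiagram m w x y ↔ boxRank n m x y ∈ Δ))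
    (k : ℕ) (hk : k < n + m) (hw : w.getD k false = true) :
    stepRank n m w k ∈ Δ ∧ stepRank n m w k - n ∉ Δ := by
  have hk' : k < w.length := by omega
  obtain ⟨ht, hA⟩ := claimA n m Δ w hlen hcnt hbd k hk' hw
  set t := (w.take k).countP (· == true) with hts
  set f := (w.take k).countP (· == false) with hfs
  have hfle : f ≤ m := le_trans (countP_take_le _ w k) (le_of_eq (cntF n m w hlen hcnt))
  have hsr : stepRank n m w k = -(m:ℤ) + n * f - m * t :=
    stepRank_eq n m w k (le_of_lt hk')
  constructor
  · by_cases hfm' : f < m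
    · have hx : (m - 1 - f) < m := by omega
      have hmem := (hA (m-1-f) hx).mpr (by omega)
      have he : boxRank n m (m-1-f) t = stepRank n m w k := by
        unfold boxRank; rw [hsr]
        have h1 : ((m - 1 - f : ℕ) : ℤ) = (m:ℤ) - 1 - f := by omega
        rw [h1]; ring
      rwa [he] at hmem
    · have hf : f = m := by omega
      have hmem := mem_combo h0 hninv hminv (n-1-t) 0
      have he : ((m:ℤ) * ((n-1-t : ℕ):ℤ) + n * ((0:ℕ):ℤ)) = stepRank n m w k := by
        rw [hsr, hf]
        have h2 : ((n-1-t:ℕ):ℤ) = (n:ℤ)-1-t := by omega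
        rw [h2]; ring
      rwa [he] at hmem
  · by_cases hf0 : f = 0
    · intro hmem
      have hge := hpos _ hmem
      rw [hsr, hf0] at hge
      have hm1 : (1:ℤ) ≤ m := by exact_mod_cast hm
      have hn1 : (1:ℤ) ≤ n := by exact_mod_cast hn
      have ht0 : (0:ℤ) ≤ t := Int.natCast_nonneg t
      push_cast at hge
      have hmt : (0:ℤ) ≤ (m:ℤ) * t := by positivity
      linarith
    · have hx : (m - f) < m := by omega
      have hnlt : ¬ ((m-f) + f < m) := by omega
      have h2 : boxRank n m (m-f) t ∉ Δ := fun hc => hnlt ((hA (m-f) hx).mp hc)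
      have he : boxRank n m (m-f) t = stepRank n m w k - n := by
        rw [hsr]; unfold boxRank
        have h1 : ((m-f:ℕ):ℤ) = (m:ℤ) - f := by omega
        rw [h1]; ring
      rwa [he] at h2

private lemma horiz_step (hn : 0 < n) (hm : 0 < m)
    (h0 : (0:ℤ) ∈ Δ) (hpos : ∀ x ∈ Δ, 0 ≤ x)
    (hninv : ∀ x ∈ Δ, x + n ∈ Δ) (hminv : ∀ x ∈ Δ, x + m ∈ Δ)
    (hlen : w.length = n + m) (hcnt : w.count true = n)
    (hbd : ∀ x < m, ∀ y < n, (inDiagram m w x y ↔ boxRank n m x y ∈ Δ))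
    (k : ℕ) (hk : k < n + m) (hw : w.getD k false = false) :
    stepRank n m w k ∉ Δ ∧ stepRank n m w k + m ∈ Δ := by
  have hk' : k < w.length := by omega
  obtain ⟨hf, hB⟩ := claimB n m Δ w hlen hcnt hbd k hk' hw
  set t := (w.take k).countP (· == true) with hts
  set f := (w.take k).countP (· == false) with hfs
  have htle : t ≤ n := le_trans (countP_take_le _ w k) (le_of_eq hcnt)
  have hsr : stepRank n m w k = -(m:ℤ) + n * f - m * t :=
    stepRank_eq n m w k (le_of_lt hk')
  constructor
  · by_cases htn : t < n
    · have hmem : boxRank n m (m-1-f) t ∉ Δ := fun hc => by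
        have := (hB t htn).mp hc; omega
      have he : boxRank n m (m-1-f) t = stepRank n m w k := by
        unfold boxRank; rw [hsr]
        have h1 : ((m - 1 - f : ℕ) : ℤ) = (m:ℤ) - 1 - f := by omega
        rw [h1]; ring
      rwa [he] at hmem
    · have htn' : t = n := by omega
      intro hmem
      have hge := hpos _ hmem
      rw [hsr, htn'] at hge
      have hf1 : (f:ℤ) ≤ (m:ℤ) - 1 := by omega
      have hn0 : (0:ℤ) ≤ n := Int.natCast_nonneg n
      have hn1 : (1:ℤ) ≤ n := by exact_mod_cast hn
      have hm1 : (1:ℤ) ≤ m := by exact_mod_cast hm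
      nlinarith
  · by_cases ht0 : t = 0
    · have hmem := mem_combo h0 hninv hminv 0 f
      have he : ((m:ℤ) * ((0:ℕ):ℤ) + n * (f:ℤ)) = stepRank n m w k + m := by
        rw [hsr, ht0]; push_cast; ring
      rwa [he] at hmem
    · have hy : t - 1 < n := by omega
      have hmem : boxRank n m (m-1-f) (t-1) ∈ Δ := (hB (t-1) hy).mpr (by omega)
      have he : boxRank n m (m-1-f) (t-1) = stepRank n m w k + m := by
        unfold boxRank; rw [hsr]
        have h1 : ((m - 1 - f : ℕ) : ℤ) = (m:ℤ) - 1 - f := by omega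
        have h2 : ((t - 1 : ℕ) : ℤ) = (t:ℤ) - 1 := by omega
        rw [h1, h2]; ring
      rwa [he] at hmem

end main2

section main3
variable {n m : ℕ} {Δ : Set ℤ} {w : List Bool}

private lemma vert_surj (hn : 0 < n) (hm : 0 < m) (hco : Nat.Coprime n m)
    (h0 : (0:ℤ) ∈ Δ) (hpos : ∀ x ∈ Δ, 0 ≤ x)
    (hninv : ∀ x ∈ Δ, x + n ∈ Δ) (hminv : ∀ x ∈ Δ, x + m ∈ Δ)
    (hlen : w.length = n + m) (hcnt : w.count true = n)
    (hbd : ∀ x < m, ∀ y < n, (inDiagram m w x y ↔ boxRank n m x y ∈ Δ))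
    (g : ℤ) (hg : g ∈ Δ) (hgn : g - n ∉ Δ) :
    ∃ k < n + m, w.getD k false = true ∧ stepRank n m w k = g := by
  have hg0 : 0 ≤ g := hpos g hg
  -- Bezout
  have hcop : IsCoprime (m:ℤ) (n:ℤ) := by
    rw [Int.isCoprime_iff_gcd_eq_one, Int.gcd_natCast_natCast]
    exact hco.symm
  obtain ⟨a, b, hab⟩ := hcop
  set D : ℤ := m * ((n:ℤ) - 1) - g with hD
  set Y : ℤ := a * D with hY
  have hn0 : (0:ℤ) < n := by exact_mod_cast hn
  have hm0 : (0:ℤ) < m := by exact_mod_cast hm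
  set q : ℤ := Y / n with hq
  set r : ℤ := Y % n with hr
  have hqr : (n:ℤ) * q + r = Y := Int.mul_ediv_add_emod Y n
  have hr0 : 0 ≤ r := Int.emod_nonneg Y (by omega)
  have hrn : r < n := Int.emod_lt_of_pos Y hn0
  set y : ℕ := r.toNat with hy
  have hyr : (y:ℤ) = r := Int.toNat_of_nonneg hr0
  have hyn : y < n := by omega
  set X : ℤ := b * D + m * q with hX
  have hXeq : (m:ℤ) * ((n:ℤ) - 1 - y) - g = n * X := by
    rw [hyr, hX, hD]
    have hr2 : r = Y - n * q := by linarith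
    rw [hr2, hY, hD]
    linear_combination (-(m * ((n:ℤ)-1) - g)) * hab
  -- X bounds
  have hX0 : 0 ≤ X := by
    by_contra hneg
    push_neg at hneg
    have hmem := mem_combo' (n := n) (m := m) h0 hninv hminv ((n:ℤ)-1-y) (-X-1)
      (by omega) (by omega)
    have : (m:ℤ) * ((n:ℤ)-1-y) + n * (-X-1) = g - n := by linarith
    exact hgn (this ▸ hmem)
  have hXm : X < m := by
    by_contra hge
    push_neg at hge
    have h1 : (m:ℤ) * ((n:ℤ) - 1 - y) ≤ m * ((n:ℤ) - 1) := by
      apply mul_le_mul_of_nonneg_left _ (le_of_lt hm0)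
      have : (0:ℤ) ≤ y := by positivity
      linarith
    have h2 : (n:ℤ) * m ≤ n * X := mul_le_mul_of_nonneg_left hge (le_of_lt hn0)
    nlinarith
  set x : ℕ := X.toNat with hx
  have hxX : (x:ℤ) = X := Int.toNat_of_nonneg hX0
  have hxm : x < m := by omega
  -- the vertical step in row y
  have hyn' : y < w.countP (· == true) := by
    have : w.countP (· == true) = n := hcnt
    omega
  obtain ⟨hklen, hkp, hkt⟩ := idx_spec (· == true) w y hyn'
  set k := (w.findIdxs (· == true)).getD y 0 with hkdef
  have hw' : w.getD k false = true := by simpa using hkp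
  obtain ⟨ht, hA⟩ := claimA n m Δ w hlen hcnt hbd k hklen hw'
  rw [hkt] at hA ht
  set f := (w.take k).countP (· == false) with hf
  have hfle : f ≤ m := le_trans (countP_take_le _ w k) (le_of_eq (cntF n m w hlen hcnt))
  have hge : ¬ (x + f < m) := by
    intro hlt
    have hmem := (hA x hxm).mpr hlt
    have he : boxRank n m x y = g - n := by
      unfold boxRank; rw [hxX]; linarith [hXeq]
    exact hgn (he ▸ hmem)
  have hle : x + f ≤ m := by
    by_cases hx1 : 1 ≤ x
    · have hx' : x - 1 < m := by omega
      have hbx : boxRank n m (x-1) y = g := by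
        unfold boxRank
        have h1 : ((x-1:ℕ):ℤ) = (x:ℤ) - 1 := by omega
        rw [h1, hxX]; linarith [hXeq]
      have := (hA (x-1) hx').mp (hbx ▸ hg)
      omega
    · omega
  have hfx : f = m - x := by omega
  refine ⟨k, by omega, hw', ?_⟩
  rw [stepRank_eq n m w k (le_of_lt hklen), hkt, ← hf, hfx]
  have h1 : ((m - x : ℕ):ℤ) = (m:ℤ) - x := by omega
  rw [h1, hxX]
  linarith [hXeq]

private lemma horiz_surj (hn : 0 < n) (hm : 0 < m) (hco : Nat.Coprime n m)
    (h0 : (0:ℤ) ∈ Δ) (hpos : ∀ x ∈ Δ, 0 ≤ x)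
    (hninv : ∀ x ∈ Δ, x + n ∈ Δ) (hminv : ∀ x ∈ Δ, x + m ∈ Δ)
    (hlen : w.length = n + m) (hcnt : w.count true = n)
    (hbd : ∀ x < m, ∀ y < n, (inDiagram m w x y ↔ boxRank n m x y ∈ Δ))
    (c : ℤ) (hc : c ∉ Δ) (hcm : c + m ∈ Δ) :
    ∃ k < n + m, w.getD k false = false ∧ stepRank n m w k = c := by
  have hc0 : 0 ≤ c + m := hpos _ hcm
  have hcop : IsCoprime (n:ℤ) (m:ℤ) := by
    rw [Int.isCoprime_iff_gcd_eq_one, Int.gcd_natCast_natCast]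
    exact hco
  obtain ⟨a, b, hab⟩ := hcop
  set D : ℤ := n * ((m:ℤ) - 1) - c with hD
  set Y : ℤ := a * D with hY
  have hn0 : (0:ℤ) < n := by exact_mod_cast hn
  have hm0 : (0:ℤ) < m := by exact_mod_cast hm
  set q : ℤ := Y / m with hq
  set r : ℤ := Y % m with hr
  have hqr : (m:ℤ) * q + r = Y := Int.mul_ediv_add_emod Y m
  have hr0 : 0 ≤ r := Int.emod_nonneg Y (by omega)
  have hrm : r < m := Int.emod_lt_of_pos Y hm0
  set x : ℕ := r.toNat with hxdef
  have hxr : (x:ℤ) = r := Int.toNat_of_nonneg hr0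
  have hxm : x < m := by omega
  set X : ℤ := b * D + n * q with hX
  have hXeq : (n:ℤ) * ((m:ℤ) - 1 - x) - c = m * X := by
    rw [hxr, hX, hD]
    have hr2 : r = Y - m * q := by linarith
    rw [hr2, hY, hD]
    linear_combination (-(n * ((m:ℤ)-1) - c)) * hab
  -- X bounds : 1 ≤ X ≤ n
  have hX1 : 1 ≤ X := by
    by_contra hneg
    push_neg at hneg
    have hmem := mem_combo' (n := n) (m := m) h0 hninv hminv (-X) ((m:ℤ)-1-x)
      (by omega) (by omega)
    have : (m:ℤ) * (-X) + n * ((m:ℤ)-1-x) = c := by linarith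
    exact hc (this ▸ hmem)
  have hXn : X ≤ n := by
    by_contra hge
    push_neg at hge
    have h1 : (n:ℤ) * ((m:ℤ) - 1 - x) ≤ n * ((m:ℤ) - 1) := by
      apply mul_le_mul_of_nonneg_left _ (le_of_lt hn0)
      have : (0:ℤ) ≤ x := by positivity
      linarith
    have h2 : (m:ℤ) * (n+1) ≤ m * X := mul_le_mul_of_nonneg_left (by omega) (le_of_lt hm0)
    nlinarith
  set Yt : ℤ := X - 1 with hYt
  -- the horizontal step in column x
  have hcntF : w.countP (· == false) = m := cntF n m w hlen hcnt
  have hj : m - 1 - x < w.countP (· == false) := by omega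
  obtain ⟨hklen, hkp, hkf⟩ := idx_spec (· == false) w (m - 1 - x) hj
  set k := (w.findIdxs (· == false)).getD (m-1-x) 0 with hkdef
  have hw' : w.getD k false = false := by simpa using hkp
  obtain ⟨hfm, hB⟩ := claimB n m Δ w hlen hcnt hbd k hklen hw'
  rw [hkf] at hB hfm
  set t := (w.take k).countP (· == true) with ht
  have hmx : m - 1 - (m - 1 - x) = x := by omega
  rw [hmx] at hB
  have htle : t ≤ n := le_trans (countP_take_le _ w k) (le_of_eq hcnt)
  -- t = Yt
  have hYt0 : (0:ℤ) ≤ Yt := by omega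
  have hYtn : Yt.toNat < n := by omega
  have hcast : ((Yt.toNat : ℕ):ℤ) = Yt := Int.toNat_of_nonneg hYt0
  have hbx : boxRank n m x Yt.toNat = c := by
    unfold boxRank; rw [hcast, hYt]; linarith [hXeq]
  have hub : ¬ (Yt.toNat < t) := fun hlt => hc (hbx ▸ (hB Yt.toNat hYtn).mpr hlt)
  have hlb : Yt.toNat ≤ t := by
    by_cases h1 : Yt.toNat = 0
    · omega
    · have hy2 : Yt.toNat - 1 < n := by omega
      have hbx2 : boxRank n m x (Yt.toNat - 1) = c + m := by
        unfold boxRank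
        have h2 : ((Yt.toNat - 1 : ℕ):ℤ) = Yt - 1 := by omega
        rw [h2, hYt]; linarith [hXeq]
      have := (hB (Yt.toNat - 1) hy2).mp (hbx2 ▸ hcm)
      omega
  have htY : (t:ℤ) = Yt := by omega
  refine ⟨k, by omega, hw', ?_⟩
  rw [stepRank_eq n m w k (le_of_lt hklen), hkf, ← ht]
  have h1 : ((m - 1 - x : ℕ):ℤ) = (m:ℤ) - 1 - x := by omega
  rw [h1, htY, hYt]
  linarith [hXeq]

end main3


section main4
variable {n m : ℕ} {Δ : Set ℤ} {w : List Bool}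

private lemma stepRank_inj (hco : Nat.Coprime n m)
    (hlen : w.length = n + m) (hcnt : w.count true = n)
    (k k' : ℕ) (hk : k < n + m) (hk' : k' < n + m)
    (h : stepRank n m w k = stepRank n m w k') : k = k' := by
  rw [stepRank_eq n m w k (by omega), stepRank_eq n m w k' (by omega)] at h
  have htf : (w.take k).countP (· == true) + (w.take k).countP (· == false) = k :=
    countP_take_tf w k (by omega)
  have htf' : (w.take k').countP (· == true) + (w.take k').countP (· == false) = k' :=
    countP_take_tf w k' (by omega)
  set f := (w.take k).countP (· == false)
  set t := (w.take k).countP (· == true)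
  set f' := (w.take k').countP (· == false)
  set t' := (w.take k').countP (· == true)
  have hco2 : Nat.Coprime (n + m) m := by
    simpa using Nat.coprime_add_self_left.mpr hco
  have hcop : IsCoprime ((n+m : ℕ):ℤ) (m:ℤ) := by
    rw [Int.isCoprime_iff_gcd_eq_one, Int.gcd_natCast_natCast]
    exact hco2
  have hdvd : ((n+m:ℕ):ℤ) ∣ (m:ℤ) * ((k:ℤ) - k') := by
    refine ⟨(f:ℤ) - f', ?_⟩
    have e1 : (t:ℤ) = (k:ℤ) - f := by omega
    have e2 : (t':ℤ) = (k':ℤ) - f' := by omega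
    rw [e1, e2] at h
    push_cast
    linear_combination -h
  have hdvd2 : ((n+m:ℕ):ℤ) ∣ ((k:ℤ) - k') := hcop.dvd_of_dvd_mul_left hdvd
  obtain ⟨c, hc⟩ := hdvd2
  have hb1 : -((n:ℤ)+m) < (k:ℤ) - k' := by omega
  have hb2 : (k:ℤ) - k' < (n:ℤ)+m := by omega
  have hnm : (0:ℤ) < (n:ℤ)+m := by omega
  have hcast : ((n+m:ℕ):ℤ) = (n:ℤ)+m := by push_cast; ring
  rw [hcast] at hc
  have hc0 : c = 0 := by
    rcases lt_trichotomy c 0 with hlt|he|hgt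
    · have := mul_le_mul_of_nonneg_left (show c ≤ -1 by omega) (le_of_lt hnm)
      linarith
    · exact he
    · have := mul_le_mul_of_nonneg_left (show (1:ℤ) ≤ c by omega) (le_of_lt hnm)
      linarith
  rw [hc0, mul_zero] at hc
  omega

end main4

/-- Let `n, m` be coprime positive integers and `Δ ⊆ ℤ≥0` a
`0`-normalized `(n,m)`-invariant subset. Let `w` be the boundary path of the diagram
`D(Δ)` (the word with `n` vertical and `m` horizontal steps whose Young diagram consists
exactly of the boxes with rank in `Δ`). Then:
(a) the ranks of the vertical steps of `w` are exactly the `n`-generators of `Δ`;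
(b) the ranks of the horizontal steps of `w` are exactly the `m`-cogenerators of `Δ`;
(c) `ζ(D(Δ)) = G(Δ)`: sorting the steps of `w` in increasing order of rank yields precisely
the word obtained by listing the union of the `n`-generators and `m`-cogenerators in
increasing order (a strictly monotone enumeration `s` of the skeleton) and recording a
vertical step for each `n`-generator and a horizontal step for each `m`-cogenerator. -/
theorem statement10 (n m : ℕ) (hn : 0 < n) (hm : 0 < m) (hco : Nat.Coprime n m)
    (Δ : Set ℤ) (h0 : (0 : ℤ) ∈ Δ) (hpos : ∀ x ∈ Δ, 0 ≤ x)
    (hninv : ∀ x ∈ Δ, x + n ∈ Δ) (hminv : ∀ x ∈ Δ, x + m ∈ Δ)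
    (w : List Bool) (hlen : w.length = n + m) (hcnt : w.count true = n)
    (hbd : ∀ x < m, ∀ y < n, (inDiagram m w x y ↔ boxRank n m x y ∈ Δ)) :
    ({r : ℤ | ∃ k < n + m, w.getD k false = true ∧ stepRank n m w k = r} =
        {x : ℤ | x ∈ Δ ∧ x - n ∉ Δ}) ∧
    ({r : ℤ | ∃ k < n + m, w.getD k false = false ∧ stepRank n m w k = r} =
        {x : ℤ | x ∉ Δ ∧ x + m ∈ Δ}) ∧
    (∃ s : Fin (n + m) → ℤ, StrictMono s ∧
      Set.range s = {x : ℤ | (x ∈ Δ ∧ x - n ∉ Δ) ∨ (x ∉ Δ ∧ x + m ∈ Δ)} ∧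
      ∀ k : Fin (n + m),
        ((sweep n m w).getD (k : ℕ) false = true ↔ (s k ∈ Δ ∧ s k - n ∉ Δ))) := by
  have parta : {r : ℤ | ∃ k < n + m, w.getD k false = true ∧ stepRank n m w k = r} =
      {x : ℤ | x ∈ Δ ∧ x - n ∉ Δ} := by
    ext r
    simp only [Set.mem_setOf_eq]
    constructor
    · rintro ⟨k, hk, hwk, rfl⟩
      exact vert_step hn hm h0 hpos hninv hminv hlen hcnt hbd k hk hwk
    · rintro ⟨h1, h2⟩
      exact vert_surj hn hm hco h0 hpos hninv hminv hlen hcnt hbd r h1 h2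
  have partb : {r : ℤ | ∃ k < n + m, w.getD k false = false ∧ stepRank n m w k = r} =
      {x : ℤ | x ∉ Δ ∧ x + m ∈ Δ} := by
    ext r
    simp only [Set.mem_setOf_eq]
    constructor
    · rintro ⟨k, hk, hwk, rfl⟩
      exact horiz_step hn hm h0 hpos hninv hminv hlen hcnt hbd k hk hwk
    · rintro ⟨h1, h2⟩
      exact horiz_surj hn hm hco h0 hpos hninv hminv hlen hcnt hbd r h1 h2
  refine ⟨parta, partb, ?_⟩
  set cmp : ℕ → ℕ → Bool := fun k k' =>
    decide (stepRank n m w k < stepRank n m w k' ∨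
      (stepRank n m w k = stepRank n m w k' ∧ k' ≤ k)) with hcmp
  set L : List ℕ := (List.range w.length).mergeSort cmp with hLdef
  have hperm : L.Perm (List.range w.length) := List.mergeSort_perm _ _
  have hlenL : L.length = n + m := by rw [hperm.length_eq, List.length_range, hlen]
  have hmemL : ∀ j ∈ L, j < n + m := fun j hj => by
    have := hperm.mem_iff.mp hj
    rw [List.mem_range, hlen] at this
    exact this
  have hnd : L.Nodup := hperm.nodup_iff.mpr List.nodup_range
  have htrans : ∀ a b c : ℕ, cmp a b = true → cmp b c = true → cmp a c = true := by
    intro a b c hab hbc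
    simp only [hcmp, decide_eq_true_eq] at *
    rcases hab with h1|⟨h1,h1'⟩ <;> rcases hbc with h2|⟨h2,h2'⟩
    · exact Or.inl (lt_trans h1 h2)
    · exact Or.inl (h2 ▸ h1)
    · exact Or.inl (h1 ▸ h2)
    · exact Or.inr ⟨h1.trans h2, le_trans h2' h1'⟩
  have htot : ∀ a b : ℕ, (cmp a b || cmp b a) = true := by
    intro a b
    simp only [hcmp, Bool.or_eq_true, decide_eq_true_eq]
    rcases lt_trichotomy (stepRank n m w a) (stepRank n m w b) with h|h|h
    · exact Or.inl (Or.inl h)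
    · rcases le_total b a with hba|hba
      · exact Or.inl (Or.inr ⟨h, hba⟩)
      · exact Or.inr (Or.inr ⟨h.symm, hba⟩)
    · exact Or.inr (Or.inl h)
  have hsorted : L.Pairwise (fun a b => cmp a b = true) := by
    rw [hLdef]; exact List.pairwise_mergeSort htrans htot _
  have hpw := List.pairwise_iff_getElem.mp hsorted
  refine ⟨fun k => stepRank n m w (L.getD k 0), ?_, ?_, ?_⟩
  · intro i j hij
    have hij' : (i:ℕ) < (j:ℕ) := hij
    have hi : (i:ℕ) < L.length := by rw [hlenL]; exact i.2
    have hjl : (j:ℕ) < L.length := by rw [hlenL]; exact j.2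
    have hcmpij := hpw i j hi hjl hij'
    show stepRank n m w (L.getD i 0) < stepRank n m w (L.getD j 0)
    rw [List.getD_eq_getElem _ _ hi, List.getD_eq_getElem _ _ hjl]
    simp only [hcmp, decide_eq_true_eq] at hcmpij
    rcases hcmpij with h|⟨h,hle⟩
    · exact h
    · exfalso
      have hLi : L[(i:ℕ)] < n + m := hmemL _ (L.getElem_mem _)
      have hLj : L[(j:ℕ)] < n + m := hmemL _ (L.getElem_mem _)
      have heq := stepRank_inj hco hlen hcnt _ _ hLi hLj h
      have := (List.Nodup.getElem_inj_iff hnd).mp heq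
      omega
  · ext r
    simp only [Set.mem_range, Set.mem_setOf_eq]
    constructor
    · rintro ⟨k, rfl⟩
      have hk : (k:ℕ) < L.length := by rw [hlenL]; exact k.2
      have hLk : L.getD k 0 < n + m := by
        rw [List.getD_eq_getElem _ _ hk]; exact hmemL _ (L.getElem_mem _)
      cases hwk : w.getD (L.getD (k:ℕ) 0) false
      · exact Or.inr (horiz_step hn hm h0 hpos hninv hminv hlen hcnt hbd _ hLk hwk)
      · exact Or.inl (vert_step hn hm h0 hpos hninv hminv hlen hcnt hbd _ hLk hwk)
    · rintro (⟨h1, h2⟩ | ⟨h1, h2⟩)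
      · obtain ⟨j, hj, hwj, hrj⟩ :=
          vert_surj hn hm hco h0 hpos hninv hminv hlen hcnt hbd r h1 h2
        have hjL : j ∈ L := hperm.mem_iff.mpr (by rw [List.mem_range, hlen]; exact hj)
        obtain ⟨i, hi, hij⟩ := List.mem_iff_getElem.mp hjL
        refine ⟨⟨i, by omega⟩, ?_⟩
        show stepRank n m w (L.getD i 0) = r
        rw [List.getD_eq_getElem _ _ hi, hij]; exact hrj
      · obtain ⟨j, hj, hwj, hrj⟩ :=
          horiz_surj hn hm hco h0 hpos hninv hminv hlen hcnt hbd r h1 h2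
        have hjL : j ∈ L := hperm.mem_iff.mpr (by rw [List.mem_range, hlen]; exact hj)
        obtain ⟨i, hi, hij⟩ := List.mem_iff_getElem.mp hjL
        refine ⟨⟨i, by omega⟩, ?_⟩
        show stepRank n m w (L.getD i 0) = r
        rw [List.getD_eq_getElem _ _ hi, hij]; exact hrj
  · intro k
    have hk : (k:ℕ) < L.length := by rw [hlenL]; exact k.2
    have hLk : L.getD (k:ℕ) 0 < n + m := by
      rw [List.getD_eq_getElem _ _ hk]; exact hmemL _ (L.getElem_mem _)
    have hkm : (k:ℕ) < (L.map (fun j => w.getD j false)).length := by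
      rw [List.length_map]; exact hk
    have hs : (sweep n m w).getD (k:ℕ) false = w.getD (L.getD (k:ℕ) 0) false := by
      unfold sweep
      rw [← hcmp, ← hLdef]
      rw [List.getD_eq_getElem _ _ hkm, List.getElem_map, List.getD_eq_getElem _ _ hk]
    rw [hs]
    show _ ↔ stepRank n m w (L.getD (k:ℕ) 0) ∈ Δ ∧ _
    constructor
    · intro htrue
      exact vert_step hn hm h0 hpos hninv hminv hlen hcnt hbd _ hLk htrue
    · rintro ⟨h1, h2⟩
      cases hwk : w.getD (L.getD (k:ℕ) 0) false
      · exact absurd h1 (horiz_step hn hm h0 hpos hninv hminv hlen hcnt hbd _ hLk hwk).1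
      · rfl
end

section
/- Let n ≥ 1 and let a = (a_1,…,a_n) ∈ ℤ≥0^n with a_n > 0. Define the cyclic shift π(a) = (a_n − 1, a_1, a_2, …, a_{n−1}). Then d(π(a)) = d(a). -/
/-- The statistic `d(a) = #{(i,j) : i < j and (a_i = a_j or a_j = a_i + 1)}`. -/
def dStat (n : ℕ) (a : Fin n → ℕ) : ℕ :=
  (Finset.univ.filter fun p : Fin n × Fin n =>
    p.1 < p.2 ∧ (a p.1 = a p.2 ∨ a p.2 = a p.1 + 1)).card

/-- Let `n ≥ 1` and `a ∈ ℤ≥0^n` with `a_n > 0`. For the cyclic shift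
`π(a) = (a_n - 1, a_1, …, a_{n-1})` one has `d(π(a)) = d(a)`. -/
theorem statement11 (n : ℕ) (hn : 0 < n) (a : Fin n → ℕ)
    (hlast : 0 < a ⟨n - 1, by omega⟩) :
    dStat n (fun i : Fin n =>
      if (i : ℕ) = 0 then a ⟨n - 1, by omega⟩ - 1
      else a ⟨(i : ℕ) - 1, by omega⟩) = dStat n a := by
  classical
  unfold dStat
  apply Finset.card_nbij'
    (i := fun p : Fin n × Fin n =>
      if p.1.val = 0 then
        (⟨p.2.val - 1, Nat.lt_of_le_of_lt (Nat.sub_le _ _) p.2.isLt⟩, ⟨n - 1, by omega⟩)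
      else
        (⟨p.1.val - 1, Nat.lt_of_le_of_lt (Nat.sub_le _ _) p.1.isLt⟩,
         ⟨p.2.val - 1, Nat.lt_of_le_of_lt (Nat.sub_le _ _) p.2.isLt⟩))
    (j := fun q : Fin n × Fin n =>
      if q.2.val = n - 1 then
        (⟨0, hn⟩, ⟨(q.1.val + 1) % n, Nat.mod_lt _ hn⟩)
      else
        (⟨(q.1.val + 1) % n, Nat.mod_lt _ hn⟩, ⟨(q.2.val + 1) % n, Nat.mod_lt _ hn⟩))
  · rintro ⟨i, j⟩ hp
    simp only [Finset.mem_coe, Finset.mem_filter, Finset.mem_univ, true_and, Fin.lt_def] at hp ⊢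
    obtain ⟨hij, hval⟩ := hp
    by_cases h1 : i.val = 0
    · simp only [h1, if_pos, if_true] at hval ⊢
      have hj0 : j.val ≠ 0 := by omega
      simp only [hj0, if_neg, if_false] at hval
      refine ⟨by have := j.isLt; omega, ?_⟩
      omega
    · simp only [h1, if_neg, if_false] at hval ⊢
      have hj0 : j.val ≠ 0 := by omega
      simp only [hj0, if_neg, if_false] at hval
      exact ⟨by omega, hval⟩
  · rintro ⟨i, j⟩ hp
    simp only [Finset.mem_coe, Finset.mem_filter, Finset.mem_univ, true_and, Fin.lt_def] at hp ⊢
    obtain ⟨hij, hval⟩ := hp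
    have hjn := j.isLt
    by_cases h1 : j.val = n - 1
    · simp only [h1, if_pos, if_true]
      have hi1 : (i.val + 1) % n = i.val + 1 := Nat.mod_eq_of_lt (by omega)
      simp only [hi1]
      refine ⟨by omega, ?_⟩
      have : a ⟨n - 1, by omega⟩ = a j := by congr 1; exact Fin.ext h1.symm
      simp only [Nat.add_eq_zero, Nat.succ_ne_zero, if_neg, and_false, if_false]
      have hieq : a ⟨i.val + 1 - 1, by omega⟩ = a i := by congr 1
      have hl2 : 0 < a j := this ▸ hlast
      rw [hieq, this]
      omega
    · simp only [h1, if_neg, if_false]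
      have hi1 : (i.val + 1) % n = i.val + 1 := Nat.mod_eq_of_lt (by omega)
      have hj1 : (j.val + 1) % n = j.val + 1 := Nat.mod_eq_of_lt (by omega)
      simp only [hi1, hj1, Nat.add_eq_zero, Nat.succ_ne_zero, and_false, if_neg, if_false]
      refine ⟨by omega, ?_⟩
      have h2 : a ⟨i.val + 1 - 1, by omega⟩ = a i := by congr 1
      have h3 : a ⟨j.val + 1 - 1, by omega⟩ = a j := by congr 1
      rw [h2, h3]
      exact hval
  · rintro ⟨i, j⟩ hp
    simp only [Finset.mem_coe, Finset.mem_filter, Finset.mem_univ, true_and, Fin.lt_def] at hp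
    obtain ⟨hij, -⟩ := hp
    have hjn := j.isLt
    have hj0 : 0 < j.val := by omega
    by_cases h1 : i.val = 0
    · have key : (j.val - 1 + 1) % n = j.val := by
        rw [Nat.sub_add_cancel hj0]; exact Nat.mod_eq_of_lt hjn
      simp [h1, key, Prod.ext_iff, Fin.ext_iff]
    · have key1 : (i.val - 1 + 1) % n = i.val := by
        rw [Nat.sub_add_cancel (by omega)]; exact Nat.mod_eq_of_lt i.isLt
      have key2 : (j.val - 1 + 1) % n = j.val := by
        rw [Nat.sub_add_cancel hj0]; exact Nat.mod_eq_of_lt hjn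
      have hne : ¬ (j.val - 1 = n - 1) := by omega
      simp [h1, hne, key1, key2, Prod.ext_iff, Fin.ext_iff]
  · rintro ⟨i, j⟩ hp
    simp only [Finset.mem_coe, Finset.mem_filter, Finset.mem_univ, true_and, Fin.lt_def] at hp
    obtain ⟨hij, -⟩ := hp
    have hjn := j.isLt
    by_cases h1 : j.val = n - 1
    · have key : (i.val + 1) % n = i.val + 1 := Nat.mod_eq_of_lt (by omega)
      simp [h1, key, Prod.ext_iff, Fin.ext_iff]
    · have key1 : (i.val + 1) % n = i.val + 1 := Nat.mod_eq_of_lt (by omega)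
      have key2 : (j.val + 1) % n = j.val + 1 := Nat.mod_eq_of_lt (by omega)
      simp [h1, key1, key2, Prod.ext_iff, Fin.ext_iff]
end

section
/- Let n and m be coprime positive integers and let Δ be a 0-normalized (n,m)-invariant subset of ℤ≥0. Then the number of pairs (x,y) ∈ ℤ≥0 × ℤ≥0 with nx + my ≤ mn − m − n and mn − m − n − nx − my ∉ Δ is finite and equals the cardinality of ℤ≥0 ∖ Δ; that is, the area of the Dyck path D(Δ) equals gap(Δ). -/
set_option maxHeartbeats 1000000


/-- Let `n, m` be coprime positive integers and `Δ ⊆ ℤ≥0` a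
`0`-normalized `(n,m)`-invariant subset. Then the set of boxes
`(x,y) ∈ ℤ≥0 × ℤ≥0` with `nx + my ≤ mn - m - n` (nonnegative rank) whose rank
`mn - m - n - nx - my` does not lie in `Δ` is finite, and its cardinality equals
`gap(Δ) = |ℤ≥0 ∖ Δ|`; that is, `area(D(Δ)) = gap(Δ)`. -/
theorem statement16 (n m : ℕ) (hn : 0 < n) (hm : 0 < m) (hco : Nat.Coprime n m)
    (Δ : Set ℤ) (h0 : (0 : ℤ) ∈ Δ) (hpos : ∀ x ∈ Δ, 0 ≤ x)
    (hninv : ∀ x ∈ Δ, x + n ∈ Δ) (hminv : ∀ x ∈ Δ, x + m ∈ Δ) :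
    {p : ℤ × ℤ | 0 ≤ p.1 ∧ 0 ≤ p.2 ∧ (n : ℤ) * p.1 + (m : ℤ) * p.2 ≤ (m : ℤ) * n - m - n ∧
        ((m : ℤ) * n - m - n - n * p.1 - m * p.2) ∉ Δ}.Finite ∧
    {x : ℤ | 0 ≤ x ∧ x ∉ Δ}.Finite ∧
    {p : ℤ × ℤ | 0 ≤ p.1 ∧ 0 ≤ p.2 ∧ (n : ℤ) * p.1 + (m : ℤ) * p.2 ≤ (m : ℤ) * n - m - n ∧
        ((m : ℤ) * n - m - n - n * p.1 - m * p.2) ∉ Δ}.ncard =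
      {x : ℤ | 0 ≤ x ∧ x ∉ Δ}.ncard := by
  have hn' : (0:ℤ) < n := by exact_mod_cast hn
  have hm' : (0:ℤ) < m := by exact_mod_cast hm
  obtain ⟨u, v, huv⟩ : ∃ u v : ℤ, u * n + v * m = 1 := by
    obtain ⟨u, v, h⟩ := Nat.isCoprime_iff_coprime.mpr hco
    exact ⟨u, v, h⟩
  -- every nonnegative combination is in Δ
  have hmemN : ∀ b a : ℕ, ((n * a + m * b : ℕ) : ℤ) ∈ Δ := by
    intro b
    induction b with
    | zero =>
      intro a
      induction a with
      | zero => simpa using h0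
      | succ a ih =>
        have he : ((n * (a + 1) + m * 0 : ℕ) : ℤ) = ((n * a + m * 0 : ℕ) : ℤ) + n := by
          push_cast; ring
        rw [he]; exact hninv _ ih
    | succ b ih =>
      intro a
      have he : ((n * a + m * (b + 1) : ℕ) : ℤ) = ((n * a + m * b : ℕ) : ℤ) + m := by
        push_cast; ring
      rw [he]; exact hminv _ (ih a)
  have hmem : ∀ x y : ℤ, 0 ≤ x → 0 ≤ y → (n : ℤ) * x + m * y ∈ Δ := by
    intro x y hx hy
    obtain ⟨a, rfl⟩ := Int.eq_ofNat_of_zero_le hx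
    obtain ⟨b, rfl⟩ := Int.eq_ofNat_of_zero_le hy
    have he : (n:ℤ) * (a:ℤ) + (m:ℤ) * (b:ℤ) = ((n * a + m * b : ℕ) : ℤ) := by
      push_cast; ring
    rw [he]; exact hmemN b a
  -- representation lemma
  have hrep : ∀ c : ℤ, ∃ x y : ℤ, 0 ≤ x ∧ x < m ∧ c = n * x + m * y := by
    intro c
    refine ⟨(u * c) % m, c * v + n * ((u * c) / m),
      Int.emod_nonneg _ (ne_of_gt hm'), Int.emod_lt_of_pos _ hm', ?_⟩
    have h2 := Int.emod_add_mul_ediv (u * c) m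
    linear_combination (-(n : ℤ)) * h2 + (-c) * huv
  -- gaps are bounded by mn - m - n
  have hbound : ∀ c : ℤ, 0 ≤ c → c ∉ Δ → c ≤ (m:ℤ)*n - m - n := by
    intro c hc hcΔ
    by_contra hlt
    push_neg at hlt
    obtain ⟨x, y, hx0, hxm, hxy⟩ := hrep c
    have hy : 0 ≤ y := by
      by_contra hy
      push_neg at hy
      have h1 : (n:ℤ) * x ≤ n * (m - 1) :=
        mul_le_mul_of_nonneg_left (by omega) (le_of_lt hn')
      have h2 : (m:ℤ) * y ≤ m * (-1) :=
        mul_le_mul_of_nonneg_left (by omega) (le_of_lt hm')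
      nlinarith
    exact hcΔ (hxy ▸ hmem x y hx0 hy)
  set S : Set (ℤ × ℤ) := {p : ℤ × ℤ | 0 ≤ p.1 ∧ 0 ≤ p.2 ∧ (n : ℤ) * p.1 + (m : ℤ) * p.2 ≤ (m : ℤ) * n - m - n ∧
        ((m : ℤ) * n - m - n - n * p.1 - m * p.2) ∉ Δ} with hSdef
  set T : Set ℤ := {x : ℤ | 0 ≤ x ∧ x ∉ Δ} with hTdef
  have key : Set.BijOn (fun p : ℤ × ℤ => (m:ℤ)*n - m - n - n*p.1 - m*p.2) S T := by
    refine ⟨?_, ?_, ?_⟩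
    · rintro ⟨x, y⟩ ⟨hx, hy, hle, hmemS⟩
      exact ⟨by dsimp only; linarith, hmemS⟩
    · rintro ⟨x, y⟩ ⟨hx, hy, hle, -⟩ ⟨x', y'⟩ ⟨hx', hy', hle', -⟩ heq
      dsimp only at heq
      have hsum : (n:ℤ) * x + m * y = n * x' + m * y' := by linarith
      have hxltm : x < m := by nlinarith
      have hx'ltm : x' < m := by nlinarith
      have hdvd : (m:ℤ) ∣ x - x' := by
        have hcop : IsCoprime (m:ℤ) (n:ℤ) := ⟨v, u, by linarith⟩
        have : (m:ℤ) ∣ (n:ℤ) * (x - x') := ⟨y' - y, by linarith⟩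
        exact hcop.dvd_of_dvd_mul_left this
      obtain ⟨k, hk⟩ := hdvd
      have hk0 : k = 0 := by
        rcases lt_trichotomy k 0 with h | h | h
        · nlinarith [mul_le_mul_of_nonneg_left (show k ≤ (-1:ℤ) by omega) (le_of_lt hm')]
        · exact h
        · nlinarith [mul_le_mul_of_nonneg_left (show (1:ℤ) ≤ k by omega) (le_of_lt hm')]
      have hxx : x = x' := by rw [hk0, mul_zero] at hk; omega
      have hyy : y = y' := by
        have : (m:ℤ) * y = m * y' := by rw [hxx] at hsum; linarith
        exact mul_left_cancel₀ (ne_of_gt hm') this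
      simp [hxx, hyy]
    · rintro c ⟨hc0, hcΔ⟩
      obtain ⟨x, y, hx0, hxm, hxy⟩ := hrep ((m:ℤ)*n - m - n - c)
      have hy : 0 ≤ y := by
        by_contra hy
        push_neg at hy
        have heq : (n:ℤ) * ((m:ℤ) - 1 - x) + (m:ℤ) * (-1 - y) = c := by linarith
        have hc : c ∈ Δ := by
          rw [← heq]
          exact hmem _ _ (by omega) (by omega)
        exact hcΔ hc
      refine ⟨(x, y), ⟨hx0, hy, by dsimp only; linarith, ?_⟩, ?_⟩
      · dsimp only
        rw [show ((m:ℤ) * n - m - n - n * x - m * y) = c from by linarith]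
        exact hcΔ
      · show (m:ℤ)*n - m - n - n*x - m*y = c
        linarith
  have hTfin : T.Finite :=
    (Set.finite_Icc (0:ℤ) ((m:ℤ)*n - m - n)).subset
      (fun c hc => ⟨hc.1, hbound c hc.1 hc.2⟩)
  have himg : (fun p : ℤ × ℤ => (m:ℤ)*n - m - n - n*p.1 - m*p.2) '' S = T := key.image_eq
  have hSfin : S.Finite :=
    Set.Finite.of_finite_image (by rw [himg]; exact hTfin) key.injOn
  refine ⟨hSfin, hTfin, ?_⟩
  calc S.ncard = ((fun p : ℤ × ℤ => (m:ℤ)*n - m - n - n*p.1 - m*p.2) '' S).ncard :=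
        (Set.ncard_image_of_injOn key.injOn).symm
    _ = T.ncard := by rw [himg]
end
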